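/- Every locally measurable set A of finite μ_loc-measure can be written as a disjoint union A = A' ∪ A'', where A' ∈ 𝒜 has finite μ-measure and A'' is a local null set. Consequently, every locally measurable σ-finite set is the union of a σ-finite set in 𝒜 and a local null set. -/

import Mathlib

open MeasureTheory Set ENNReal

/-- A set `B` is locally measurable if `B ∩ A` is measurable for every measurable set `A`
of finite measure. -/
def LocallyMeasurable {Ω : Type*} [MeasurableSpace Ω] (μ : Measure Ω) (B : Set Ω) : Prop :=
  ∀ A : Set Ω, MeasurableSet A → μ A < ∞ → MeasurableSet (B ∩ A)

/-- A locally measurable set `B` is a local null set if `μ (B ∩ A) = 0` for every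
measurable `A` of finite measure. -/
def LocalNull {Ω : Type*} [MeasurableSpace Ω] (μ : Measure Ω) (B : Set Ω) : Prop :=
  LocallyMeasurable μ B ∧ ∀ A : Set Ω, MeasurableSet A → μ A < ∞ → μ (B ∩ A) = 0

/-- `μ_loc B = sup { μ (B ∩ A) : A measurable, μ A < ∞ }`. -/
noncomputable def muLoc {Ω : Type*} [MeasurableSpace Ω] (μ : Measure Ω) (B : Set Ω) : ℝ≥0∞ :=
  ⨆ (A : Set Ω) (_ : MeasurableSet A ∧ μ A < ∞), μ (B ∩ A)

lemma measure_inter_le_muLoc {Ω : Type*} [MeasurableSpace Ω] (μ : Measure Ω) (A B : Set Ω)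
    (hB : MeasurableSet B) (hBfin : μ B < ∞) : μ (A ∩ B) ≤ muLoc μ A :=
  le_iSup₂ (f := fun (C : Set Ω) (_ : MeasurableSet C ∧ μ C < ∞) => μ (A ∩ C)) B ⟨hB, hBfin⟩

lemma locallyMeasurable_decomposition_aux {Ω : Type*} [MeasurableSpace Ω] (μ : Measure Ω)
    (A : Set Ω) (hA : LocallyMeasurable μ A) (hfin : muLoc μ A < ∞) :
    ∃ A' A'' : Set Ω, MeasurableSet A' ∧ μ A' < ∞ ∧ LocalNull μ A'' ∧
      A = A' ∪ A'' ∧ Disjoint A' A'' := by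
  -- choose almost-maximizing sets
  have hex : ∀ n : ℕ, ∃ B : Set Ω, MeasurableSet B ∧ μ B < ∞ ∧
      muLoc μ A ≤ μ (A ∩ B) + ((n : ℝ≥0∞) + 1)⁻¹ := by
    intro n
    by_cases h0 : muLoc μ A ≤ ((n : ℝ≥0∞) + 1)⁻¹
    · refine ⟨∅, MeasurableSet.empty, by simp, ?_⟩
      calc muLoc μ A ≤ ((n : ℝ≥0∞) + 1)⁻¹ := h0
        _ ≤ μ (A ∩ ∅) + ((n : ℝ≥0∞) + 1)⁻¹ := le_add_self
    · push_neg at h0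
      have hne : ((n : ℝ≥0∞) + 1)⁻¹ ≠ 0 :=
        ENNReal.inv_ne_zero.2 (ENNReal.add_ne_top.2 ⟨ENNReal.natCast_ne_top n, one_ne_top⟩)
      have hlt : muLoc μ A - ((n : ℝ≥0∞) + 1)⁻¹ < muLoc μ A :=
        ENNReal.sub_lt_self hfin.ne ((lt_of_le_of_lt zero_le h0).ne') hne
      rw [muLoc, lt_iSup_iff] at hlt
      obtain ⟨B, hlt⟩ := hlt
      rw [lt_iSup_iff] at hlt
      obtain ⟨⟨hBm, hBfin⟩, hlt⟩ := hlt
      exact ⟨B, hBm, hBfin, tsub_le_iff_right.1 hlt.le⟩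
  choose B hBm hBfin hBle using hex
  set C : ℕ → Set Ω := fun n => ⋃ i ∈ Finset.range (n + 1), B i with hC
  have hCm : ∀ n, MeasurableSet (C n) := fun n =>
    MeasurableSet.biUnion (Finset.range (n + 1)).countable_toSet fun i _ => hBm i
  have hCfin : ∀ n, μ (C n) < ∞ := fun n =>
    (measure_biUnion_finset_le _ _).trans_lt
      (ENNReal.sum_lt_top.2 fun i _ => hBfin i)
  have hBC : ∀ n, B n ⊆ C n := fun n =>
    Set.subset_biUnion_of_mem (Finset.self_mem_range_succ n)
  have hACm : ∀ n, MeasurableSet (A ∩ C n) := fun n => hA _ (hCm n) (hCfin n)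
  have hmono : Monotone fun n => A ∩ C n := by
    intro m n hmn
    refine Set.inter_subset_inter_right _ (Set.biUnion_subset_biUnion_left ?_)
    exact Finset.coe_subset.2 (Finset.range_subset_range.2 (by omega))
  set A' : Set Ω := ⋃ n, A ∩ C n with hA'
  have hA'm : MeasurableSet A' := MeasurableSet.iUnion hACm
  have hA'sub : A' ⊆ A := Set.iUnion_subset fun n => Set.inter_subset_left
  have hA'eq : μ A' = ⨆ n, μ (A ∩ C n) :=
    Directed.measure_iUnion hmono.directed_le
  have hCle : ∀ n, μ (A ∩ C n) ≤ muLoc μ A := fun n =>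
    measure_inter_le_muLoc μ A (C n) (hCm n) (hCfin n)
  have hA'le : μ A' ≤ muLoc μ A := by
    rw [hA'eq]; exact iSup_le hCle
  have hA'fin : μ A' < ∞ := hA'le.trans_lt hfin
  have hge : muLoc μ A ≤ μ A' := by
    refine ENNReal.le_of_forall_pos_le_add fun ε hε _ => ?_
    obtain ⟨n, hn⟩ := ENNReal.exists_inv_nat_lt (by exact_mod_cast hε.ne' : (ε : ℝ≥0∞) ≠ 0)
    calc muLoc μ A ≤ μ (A ∩ B n) + ((n : ℝ≥0∞) + 1)⁻¹ := hBle n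
      _ ≤ μ A' + (ε : ℝ≥0∞) := by
          refine add_le_add (measure_mono ?_) ?_
          · exact Set.subset_iUnion_of_subset n
              (Set.inter_subset_inter_right _ (hBC n))
          · exact (ENNReal.inv_le_inv.2 (by simp)).trans hn.le
  set A'' : Set Ω := A \ A' with hA''
  have hnull : LocalNull μ A'' := by
    constructor
    · intro D hDm hDfin
      have : A'' ∩ D = (A ∩ D) \ A' := by
        rw [hA'']; ext x; simp; tauto
      rw [this]
      exact (hA D hDm hDfin).diff hA'm
    · intro D hDm hDfin
      have key : ∀ n, μ (A ∩ C n) + μ (A'' ∩ D) ≤ muLoc μ A := by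
        intro n
        have hdisj : Disjoint (A ∩ C n) (A'' ∩ D) := by
          refine Set.disjoint_left.2 fun x hx hx' => ?_
          exact hx'.1.2 (Set.mem_iUnion.2 ⟨n, hx⟩)
        have hmeas : MeasurableSet (A'' ∩ D) := by
          have : A'' ∩ D = (A ∩ D) \ A' := by
            rw [hA'']; ext x; simp; tauto
          rw [this]; exact (hA D hDm hDfin).diff hA'm
        calc μ (A ∩ C n) + μ (A'' ∩ D) = μ ((A ∩ C n) ∪ (A'' ∩ D)) :=
              (measure_union hdisj hmeas).symm
          _ ≤ μ (A ∩ (C n ∪ D)) := by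
              refine measure_mono (Set.union_subset ?_ ?_)
              · exact Set.inter_subset_inter_right _ Set.subset_union_left
              · exact Set.inter_subset_inter (Set.diff_subset) Set.subset_union_right
          _ ≤ muLoc μ A := measure_inter_le_muLoc μ A _ ((hCm n).union hDm)
              ((measure_union_le _ _).trans_lt
                (ENNReal.add_lt_top.2 ⟨hCfin n, hDfin⟩))
      have : μ A' + μ (A'' ∩ D) ≤ μ A' := by
        calc μ A' + μ (A'' ∩ D) = ⨆ n, (μ (A ∩ C n) + μ (A'' ∩ D)) := by
              rw [hA'eq, ENNReal.iSup_add]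
          _ ≤ muLoc μ A := iSup_le key
          _ ≤ μ A' := hge
      have h2 : μ A' + μ (A'' ∩ D) ≤ μ A' + 0 := by simpa using this
      exact le_antisymm ((ENNReal.add_le_add_iff_left hA'fin.ne).1 h2) zero_le
  exact ⟨A', A'', hA'm, hA'fin, hnull, (Set.union_diff_cancel hA'sub).symm,
    Set.disjoint_sdiff_right⟩

/-- Every locally measurable set of finite `μ_loc`-measure is the disjoint union of a
measurable set of finite `μ`-measure and a local null set; consequently every locally
measurable set that is σ-finite for `μ_loc` is the union of a σ-finite measurable set
and a local null set. -/
theorem locallyMeasurable_decomposition {Ω : Type*} [MeasurableSpace Ω] (μ : Measure Ω) :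
    (∀ A : Set Ω, LocallyMeasurable μ A → muLoc μ A < ∞ →
      ∃ A' A'' : Set Ω, MeasurableSet A' ∧ μ A' < ∞ ∧ LocalNull μ A'' ∧
        A = A' ∪ A'' ∧ Disjoint A' A'') ∧
    (∀ A : Set Ω, LocallyMeasurable μ A →
      (∃ s : ℕ → Set Ω, (∀ n, LocallyMeasurable μ (s n) ∧ muLoc μ (s n) < ∞) ∧
        A ⊆ ⋃ n, s n) →
      ∃ A' A'' : Set Ω, MeasurableSet A' ∧
        (∃ s : ℕ → Set Ω, (∀ n, MeasurableSet (s n) ∧ μ (s n) < ∞) ∧ A' ⊆ ⋃ n, s n) ∧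
        LocalNull μ A'' ∧ A = A' ∪ A'') := by
  refine ⟨locallyMeasurable_decomposition_aux μ, ?_⟩
  intro A hA ⟨s, hs, hcov⟩
  -- the pieces A ∩ s n are locally measurable with finite muLoc
  have hTm : ∀ n, LocallyMeasurable μ (A ∩ s n) := by
    intro n D hDm hDfin
    have : A ∩ s n ∩ D = (A ∩ D) ∩ (s n ∩ D) := by ext x; simp; tauto
    rw [this]
    exact (hA D hDm hDfin).inter ((hs n).1 D hDm hDfin)
  have hTfin : ∀ n, muLoc μ (A ∩ s n) < ∞ := by
    intro n
    refine lt_of_le_of_lt ?_ (hs n).2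
    refine iSup₂_le fun D ⟨hDm, hDfin⟩ => ?_
    calc μ (A ∩ s n ∩ D) ≤ μ (s n ∩ D) :=
          measure_mono (by intro x hx; exact ⟨hx.1.2, hx.2⟩)
      _ ≤ muLoc μ (s n) := measure_inter_le_muLoc μ (s n) D hDm hDfin
  choose A' A'' hA'm hA'fin hnull heq _ using fun n =>
    locallyMeasurable_decomposition_aux μ (A ∩ s n) (hTm n) (hTfin n)
  refine ⟨⋃ n, A' n, (⋃ n, A'' n) \ ⋃ n, A' n, MeasurableSet.iUnion hA'm,
    ⟨A', fun n => ⟨hA'm n, hA'fin n⟩, subset_rfl⟩, ?_, ?_⟩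
  · constructor
    · intro D hDm hDfin
      have : ((⋃ n, A'' n) \ ⋃ n, A' n) ∩ D = (⋃ n, A'' n ∩ D) \ ⋃ n, A' n := by
        ext x; simp; tauto
      rw [this]
      exact (MeasurableSet.iUnion fun n => (hnull n).1 D hDm hDfin).diff
        (MeasurableSet.iUnion hA'm)
    · intro D hDm hDfin
      refine measure_mono_null (t := ⋃ n, A'' n ∩ D) ?_ ?_
      · intro x hx
        obtain ⟨n, hn⟩ := Set.mem_iUnion.1 hx.1.1
        exact Set.mem_iUnion.2 ⟨n, hn, hx.2⟩
      · exact measure_iUnion_null fun n => (hnull n).2 D hDm hDfin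
  · have hAeq : A = ⋃ n, A ∩ s n := by
      ext x
      simp only [Set.mem_iUnion, Set.mem_inter_iff]
      constructor
      · intro hx
        obtain ⟨n, hn⟩ := Set.mem_iUnion.1 (hcov hx)
        exact ⟨n, hx, hn⟩
      · rintro ⟨n, hx, _⟩; exact hx
    rw [Set.union_diff_self]
    calc A = ⋃ n, A ∩ s n := hAeq
      _ = ⋃ n, (A' n ∪ A'' n) := by simp_rw [← heq]
      _ = (⋃ n, A' n) ∪ ⋃ n, A'' n := Set.iUnion_union_distrib _ _
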